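/- Fix h > 0, λ > 0, p > 0. Let φ : ℝ × ℤ → ℂ, a₀, a₂ : ℝ × ℤ → ℝ, a₁ : ℝ × ℤ → ℝ (a₁(t,n) representing the value at half-site n+1/2) satisfy, for all t ∈ ℝ and n ∈ ℤ, the discrete CSS system: (1) i·(∂ₜφ − i a₀ φ)(t,n) + D₁⁻D₁⁺φ(t,n) − a₂(t,n)² φ(t,n) + λ|φ(t,n)|^{2p} φ(t,n) = 0; (2) ∂ₜa₁(t,n) − (a₀(t,n+1) − a₀(t,n))/h = −a₂(t,n)|φ(t,n)|²; (3) ∂ₜa₂(t,n) = −Im( conj(φ(t,n−1)) D₁⁺φ(t,n−1) ); (4) (a₂(t,n+1) − a₂(t,n))/h = (1/2)|φ(t,n)|², where all t-derivatives exist. Let χ : ℝ × ℤ → ℝ be differentiable in t at each n. Then the gauge-transformed fields φ̃(t,n) = e^{iχ(t,n)} φ(t,n), ã₀(t,n) = a₀(t,n) + ∂ₜχ(t,n), ã₁(t,n) = a₁(t,n) + (χ(t,n+1) − χ(t,n))/h, ã₂(t,n) = a₂(t,n) satisfy the same four equations (with covariant derivatives taken with gauge ã₁). -/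

import Mathlib

/-- Discrete forward covariant derivative `D₁⁺φ(n) = (e^{−i h a(n)} φ(n+1) − φ(n))/h`,
where `a(n)` is the gauge component `A₁` at the half-site `n + 1/2`. -/
noncomputable def D1p (h : ℝ) (a : ℤ → ℝ) (φ : ℤ → ℂ) (n : ℤ) : ℂ :=
  (Complex.exp (-Complex.I * h * a n) * φ (n + 1) - φ n) / h

/-- Discrete backward covariant derivative `D₁⁻φ(n) = (φ(n) − e^{i h a(n−1)} φ(n−1))/h`. -/
noncomputable def D1m (h : ℝ) (a : ℤ → ℝ) (φ : ℤ → ℂ) (n : ℤ) : ℂ :=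
  (φ n - Complex.exp (Complex.I * h * a (n - 1)) * φ (n - 1)) / h

/-- Gauge-transformed scalar field `φ̃(t,n) = e^{iχ(t,n)} φ(t,n)`. -/
noncomputable def gScalar (χ : ℝ → ℤ → ℝ) (φ : ℝ → ℤ → ℂ) (t : ℝ) (n : ℤ) : ℂ :=
  Complex.exp (Complex.I * χ t n) * φ t n

/-- Gauge-transformed temporal component `ã₀(t,n) = a₀(t,n) + ∂ₜχ(t,n)`. -/
noncomputable def gA0 (χ : ℝ → ℤ → ℝ) (a₀ : ℝ → ℤ → ℝ) (t : ℝ) (n : ℤ) : ℝ :=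
  a₀ t n + deriv (fun s => χ s n) t

/-- Gauge-transformed spatial component `ã₁(t,n) = a₁(t,n) + (χ(t,n+1) − χ(t,n))/h`. -/
noncomputable def gA1 (h : ℝ) (χ : ℝ → ℤ → ℝ) (a₁ : ℝ → ℤ → ℝ) (t : ℝ) (n : ℤ) : ℝ :=
  a₁ t n + (χ t (n + 1) - χ t n) / h

lemma abs_exp_I_mul_real (x : ℝ) : ‖Complex.exp (Complex.I * x)‖ = 1 := by
  rw [mul_comm]; exact Complex.norm_exp_ofReal_mul_I x

lemma conj_exp_I_mul_real (x : ℝ) :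
    (starRingEnd ℂ) (Complex.exp (Complex.I * x)) = Complex.exp (-Complex.I * x) := by
  rw [← Complex.exp_conj]; congr 1; simp

lemma D1p_gauge (h : ℝ) (hh : h ≠ 0) (a χ : ℤ → ℝ) (φ : ℤ → ℂ) (n : ℤ) :
    D1p h (fun m => a m + (χ (m + 1) - χ m) / h)
      (fun m => Complex.exp (Complex.I * χ m) * φ m) n
      = Complex.exp (Complex.I * χ n) * D1p h a φ n := by
  unfold D1p
  have key : Complex.exp (-Complex.I * h * ((a n + (χ (n + 1) - χ n) / h : ℝ) : ℂ)) *
      (Complex.exp (Complex.I * χ (n + 1)) * φ (n + 1))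
      = Complex.exp (Complex.I * χ n) * (Complex.exp (-Complex.I * h * a n) * φ (n + 1)) := by
    rw [← mul_assoc, ← Complex.exp_add, ← mul_assoc, ← Complex.exp_add]
    congr 2
    have hhc : (h : ℂ) ≠ 0 := Complex.ofReal_ne_zero.mpr hh
    push_cast
    field_simp
    ring
  rw [key]; ring

lemma D1m_gauge (h : ℝ) (hh : h ≠ 0) (a χ : ℤ → ℝ) (ψ : ℤ → ℂ) (n : ℤ) :
    D1m h (fun m => a m + (χ (m + 1) - χ m) / h)
      (fun m => Complex.exp (Complex.I * χ m) * ψ m) n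
      = Complex.exp (Complex.I * χ n) * D1m h a ψ n := by
  unfold D1m
  have key : Complex.exp (Complex.I * h * ((a (n - 1) + (χ (n - 1 + 1) - χ (n - 1)) / h : ℝ) : ℂ)) *
      (Complex.exp (Complex.I * χ (n - 1)) * ψ (n - 1))
      = Complex.exp (Complex.I * χ n) * (Complex.exp (Complex.I * h * a (n - 1)) * ψ (n - 1)) := by
    rw [← mul_assoc, ← Complex.exp_add, ← mul_assoc, ← Complex.exp_add]
    congr 2
    have : n - 1 + 1 = n := by ring
    rw [this]
    have hhc : (h : ℂ) ≠ 0 := Complex.ofReal_ne_zero.mpr hh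
    push_cast
    field_simp
    ring
  rw [key]; ring

/-- **Gauge invariance of the discrete Chern–Simons–Schrödinger system**: the
gauge-transformed fields `(φ̃, ã₀, ã₁, ã₂ = a₂)` generated by any function `χ`
differentiable in time satisfy the same four equations. -/
theorem discrete_CSS_gauge_invariance
    (h lam p : ℝ) (hh : 0 < h) (hlam : 0 < lam) (hp : 0 < p)
    (φ : ℝ → ℤ → ℂ) (a₀ a₁ a₂ : ℝ → ℤ → ℝ) (χ : ℝ → ℤ → ℝ)
    (hφdiff : ∀ n : ℤ, Differentiable ℝ (fun t => φ t n))
    (ha₁diff : ∀ n : ℤ, Differentiable ℝ (fun t => a₁ t n))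
    (ha₂diff : ∀ n : ℤ, Differentiable ℝ (fun t => a₂ t n))
    (hχdiff : ∀ n : ℤ, Differentiable ℝ (fun t => χ t n))
    (heq1 : ∀ (t : ℝ) (n : ℤ),
      Complex.I * (deriv (fun s => φ s n) t - Complex.I * (a₀ t n : ℂ) * φ t n)
        + D1m h (a₁ t) (D1p h (a₁ t) (φ t)) n
        - ((a₂ t n : ℂ)) ^ 2 * φ t n
        + (lam : ℂ) * ((‖φ t n‖ ^ (2 * p) : ℝ) : ℂ) * φ t n = 0)
    (heq2 : ∀ (t : ℝ) (n : ℤ),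
      deriv (fun s => a₁ s n) t - (a₀ t (n + 1) - a₀ t n) / h
        = -(a₂ t n) * ‖φ t n‖ ^ 2)
    (heq3 : ∀ (t : ℝ) (n : ℤ),
      deriv (fun s => a₂ s n) t
        = -((starRingEnd ℂ) (φ t (n - 1)) * D1p h (a₁ t) (φ t) (n - 1)).im)
    (heq4 : ∀ (t : ℝ) (n : ℤ),
      (a₂ t (n + 1) - a₂ t n) / h = (1 / 2) * ‖φ t n‖ ^ 2) :
    (∀ (t : ℝ) (n : ℤ),
      Complex.I * (deriv (fun s => gScalar χ φ s n) t
          - Complex.I * (gA0 χ a₀ t n : ℂ) * gScalar χ φ t n)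
        + D1m h (gA1 h χ a₁ t) (D1p h (gA1 h χ a₁ t) (gScalar χ φ t)) n
        - ((a₂ t n : ℂ)) ^ 2 * gScalar χ φ t n
        + (lam : ℂ) * ((‖gScalar χ φ t n‖ ^ (2 * p) : ℝ) : ℂ)
            * gScalar χ φ t n = 0)
    ∧ (∀ (t : ℝ) (n : ℤ),
      deriv (fun s => gA1 h χ a₁ s n) t - (gA0 χ a₀ t (n + 1) - gA0 χ a₀ t n) / h
        = -(a₂ t n) * ‖gScalar χ φ t n‖ ^ 2)
    ∧ (∀ (t : ℝ) (n : ℤ),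
      deriv (fun s => a₂ s n) t
        = -((starRingEnd ℂ) (gScalar χ φ t (n - 1))
            * D1p h (gA1 h χ a₁ t) (gScalar χ φ t) (n - 1)).im)
    ∧ (∀ (t : ℝ) (n : ℤ),
      (a₂ t (n + 1) - a₂ t n) / h = (1 / 2) * ‖gScalar χ φ t n‖ ^ 2) :=  by
  have hne : h ≠ 0 := ne_of_gt hh
  have habs : ∀ (t : ℝ) (n : ℤ), ‖gScalar χ φ t n‖ = ‖φ t n‖ := by
    intro t n
    unfold gScalar
    rw [norm_mul, abs_exp_I_mul_real, one_mul]
  have hDp : ∀ (t : ℝ) (n : ℤ), D1p h (gA1 h χ a₁ t) (gScalar χ φ t) n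
      = Complex.exp (Complex.I * χ t n) * D1p h (a₁ t) (φ t) n := by
    intro t n
    exact D1p_gauge h hne (a₁ t) (χ t) (φ t) n
  have hDmDp : ∀ (t : ℝ) (n : ℤ),
      D1m h (gA1 h χ a₁ t) (D1p h (gA1 h χ a₁ t) (gScalar χ φ t)) n
      = Complex.exp (Complex.I * χ t n) * D1m h (a₁ t) (D1p h (a₁ t) (φ t)) n := by
    intro t n
    have hfun : D1p h (gA1 h χ a₁ t) (gScalar χ φ t)
        = fun m => Complex.exp (Complex.I * χ t m) * D1p h (a₁ t) (φ t) m :=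
      funext fun m => hDp t m
    rw [hfun]
    exact D1m_gauge h hne (a₁ t) (χ t) (D1p h (a₁ t) (φ t)) n
  refine ⟨?_, ?_, ?_, ?_⟩
  · -- equation 1
    intro t n
    have hφ' := (hφdiff n t).hasDerivAt
    have hχ' := (hχdiff n t).hasDerivAt
    have h3 := (((hχ'.ofReal_comp).const_mul Complex.I).cexp).mul hφ'
    have hder : deriv (fun s => gScalar χ φ s n) t
        = Complex.exp (Complex.I * χ t n) * (Complex.I * (deriv (fun s => χ s n) t : ℝ))
            * φ t n
          + Complex.exp (Complex.I * χ t n) * deriv (fun s => φ s n) t := by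
      have := h3.deriv
      simp only [gScalar]
      convert this using 1
      rfl
    rw [hder, hDmDp t n, habs t n]
    simp only [gScalar, gA0]
    push_cast
    linear_combination (Complex.exp (Complex.I * χ t n)) * heq1 t n
  · -- equation 2
    intro t n
    have hd : deriv (fun s => gA1 h χ a₁ s n) t
        = deriv (fun s => a₁ s n) t
          + (deriv (fun s => χ s (n + 1)) t - deriv (fun s => χ s n) t) / h := by
      have := ((ha₁diff n t).hasDerivAt.add
        ((((hχdiff (n + 1)) t).hasDerivAt.sub ((hχdiff n) t).hasDerivAt).div_const h))
      exact this.deriv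
    rw [hd, habs t n]
    simp only [gA0]
    linear_combination heq2 t n
  · -- equation 3
    intro t n
    have key : (starRingEnd ℂ) (gScalar χ φ t (n - 1))
        * D1p h (gA1 h χ a₁ t) (gScalar χ φ t) (n - 1)
        = (starRingEnd ℂ) (φ t (n - 1)) * D1p h (a₁ t) (φ t) (n - 1) := by
      rw [hDp t (n - 1)]
      simp only [gScalar, map_mul, conj_exp_I_mul_real]
      rw [mul_mul_mul_comm, ← Complex.exp_add, neg_mul, neg_add_cancel,
        Complex.exp_zero, one_mul]
    rw [key]
    exact heq3 t n
  · -- equation 4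
    intro t n
    rw [habs t n]
    exact heq4 t n
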